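/- Let a, b, c, d be positive real numbers with ε₁a + ε₂b + ε₃c + ε₄d ≠ 0 for every choice of signs εᵢ ∈ {+1, −1}, and such that each of a, b, c, d is less than the sum of the other three. Then the uniformizer R is surjective onto the circle {w ∈ ℂ : |w| = ac/(bd)} — i.e., for every w with |w| = ac/(bd) there is a configuration V of Q(a,b,c,d) with R(V) = w — if and only if (a+b−c−d)(a−b+c−d)(a−b−c+d) ≤ 0. -/

import Mathlib

set_option maxHeartbeats 1000000

/-- The uniformizer `R(V) = [v₁,v₃;v₂,v₄]` of a planar quadrilateral. -/
noncomputable def uniformizer (v₁ v₂ v₃ v₄ : ℂ) : ℂ :=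
  ((v₂ - v₁) / (v₂ - v₃)) * ((v₄ - v₃) / (v₄ - v₁))

/-- A planar configuration of the quadrilateral linkage `Q(a,b,c,d)`. -/
def IsConfig (a b c d : ℝ) (v₁ v₂ v₃ v₄ : ℂ) : Prop :=
  ‖v₂ - v₁‖ = a ∧ ‖v₃ - v₂‖ = b ∧
  ‖v₄ - v₃‖ = c ∧ ‖v₁ - v₄‖ = d

/-- Non-degeneracy of the linkage `Q(a,b,c,d)`. -/
def NonDeg (a b c d : ℝ) : Prop :=
  ∀ ε₁ ε₂ ε₃ ε₄ : ℝ, (ε₁ = 1 ∨ ε₁ = -1) → (ε₂ = 1 ∨ ε₂ = -1) →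
    (ε₃ = 1 ∨ ε₃ = -1) → (ε₄ = 1 ∨ ε₄ = -1) →
    ε₁ * a + ε₂ * b + ε₃ * c + ε₄ * d ≠ 0

/-- Each side-length is less than the sum of the other three. -/
def StrictQuad (a b c d : ℝ) : Prop :=
  a < b + c + d ∧ b < a + c + d ∧ c < a + b + d ∧ d < a + b + c

lemma absEq {x : ℂ} {r : ℝ} (hr : 0 ≤ r) (h : Complex.normSq x = r^2) :
    ‖x‖ = r := by
  rw [Complex.norm_def, h, Real.sqrt_sq hr]


lemma exists_on_circle (A B G ur ui : ℝ) (hA : 0 ≤ A) (hB : 0 < B)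
    (hineq : G^2 ≤ 4*A*B*(ur^2+ui^2)) :
    ∃ zr zi : ℝ, B*(zr^2+zi^2) = A ∧ 2*B*(zr*ur+zi*ui) = G := by
  by_cases hM : ur^2 + ui^2 = 0
  · have hur : ur = 0 := by nlinarith [sq_nonneg ur, sq_nonneg ui]
    have hui : ui = 0 := by nlinarith [sq_nonneg ur, sq_nonneg ui]
    have hG2 : G^2 ≤ 0 := by rw [hM, mul_zero] at hineq; exact hineq
    have hG : G = 0 := pow_eq_zero_iff two_ne_zero |>.mp (le_antisymm hG2 (sq_nonneg G))
    refine ⟨Real.sqrt (A/B), 0, ?_, by rw [hur, hui, hG]; ring⟩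
    rw [Real.sq_sqrt (by positivity : (0:ℝ) ≤ A/B)]
    field_simp
    ring
  · have hMpos : 0 < ur^2 + ui^2 := lt_of_le_of_ne (by positivity) (Ne.symm hM)
    have hBM : 2*B*(ur^2+ui^2) ≠ 0 := by positivity
    have ht2 : (Real.sqrt (4*A*B*(ur^2+ui^2) - G^2))^2 = 4*A*B*(ur^2+ui^2) - G^2 :=
      Real.sq_sqrt (by linarith)
    set t := Real.sqrt (4*A*B*(ur^2+ui^2) - G^2) with htdef
    refine ⟨(G*ur - t*ui)/(2*B*(ur^2+ui^2)), (G*ui + t*ur)/(2*B*(ur^2+ui^2)), ?_, ?_⟩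
    · field_simp
      linear_combination (ur^2+ui^2)*ht2
    · field_simp
      ring

theorem stmt_4 (a b c d : ℝ) (ha : 0 < a) (hb : 0 < b) (hc : 0 < c) (hd : 0 < d)
    (hnd : NonDeg a b c d) (hq : StrictQuad a b c d) :
    (∀ w : ℂ, ‖w‖ = a * c / (b * d) →
        ∃ v₁ v₂ v₃ v₄ : ℂ, IsConfig a b c d v₁ v₂ v₃ v₄ ∧
          uniformizer v₁ v₂ v₃ v₄ = w) ↔
      (a + b - c - d) * (a - b + c - d) * (a - b - c + d) ≤ 0 := by
  have hcd : ¬(a = b ∧ c = d) := by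
    rintro ⟨h1, h2⟩
    exact hnd 1 (-1) (-1) 1 (Or.inl rfl) (Or.inr rfl) (Or.inr rfl) (Or.inl rfl) (by linarith)
  constructor
  · -- surjectivity → sign condition
    intro hsurj
    have hwabs : ‖((a*c/(b*d) : ℝ) : ℂ)‖ = a*c/(b*d) := by
      rw [Complex.norm_of_nonneg (by positivity)]
    obtain ⟨v₁, v₂, v₃, v₄, ⟨h1, h2, h3, h4⟩, hR⟩ := hsurj _ hwabs
    have nA : Complex.normSq (v₂ - v₁) = a^2 := by rw [← Complex.sq_norm, h1]
    have nB : Complex.normSq (v₂ - v₃) = b^2 := by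
      rw [show v₂ - v₃ = -(v₃ - v₂) by ring, Complex.normSq_neg, ← Complex.sq_norm, h2]
    have nD : Complex.normSq (v₄ - v₁) = d^2 := by
      rw [show v₄ - v₁ = -(v₁ - v₄) by ring, Complex.normSq_neg, ← Complex.sq_norm, h4]
    have hB : v₂ - v₃ ≠ 0 := by
      intro h; rw [h, map_zero] at nB; nlinarith
    have hD : v₄ - v₁ ≠ 0 := by
      intro h; rw [h, map_zero] at nD; nlinarith
    set z := (v₂ - v₁)/(v₂ - v₃) with hzdef
    have hnz : Complex.normSq z = a^2/b^2 := by rw [hzdef, map_div₀, nA, nB]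
    have hA : v₂ - v₁ = z*(v₂ - v₃) := (div_mul_cancel₀ _ hB).symm
    rw [uniformizer] at hR
    have hCz : z*(v₄ - v₃) = ((a*c/(b*d) : ℝ) : ℂ)*(v₄ - v₁) := by
      rw [← hR, mul_assoc, div_mul_cancel₀ _ hD]
    have key : (v₂ - v₁)*(z - 1) = (v₄ - v₁)*(z - ((a*c/(b*d) : ℝ) : ℂ)) := by
      linear_combination (-1 : ℂ)*hA - hCz
    have nkey := congrArg Complex.normSq key
    rw [map_mul, map_mul, nA, nD] at nkey
    have E1 : b^2*(z.re^2 + z.im^2) = a^2 := by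
      have h5 : z.re*z.re + z.im*z.im = a^2/b^2 := by rw [← Complex.normSq_apply, hnz]
      field_simp at h5
      linear_combination h5
    have E2 : a^2*((z.re - 1)^2 + z.im^2) =
        d^2*((z.re - a*c/(b*d))^2 + z.im^2) := by
      have h5 := nkey
      simp only [Complex.normSq_apply, Complex.sub_re, Complex.sub_im, Complex.one_re,
        Complex.one_im, Complex.ofReal_re, Complex.ofReal_im] at h5
      linear_combination h5
    have E2c : a^2*b^2*d^2*((z.re - 1)^2 + z.im^2) =
        d^2*((b*d*z.re - a*c)^2 + b^2*d^2*z.im^2) := by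
      have h9 : a*c/(b*d)*(b*d) = a*c := by field_simp
      have h5 := E2
      field_simp at h5
      linear_combination (b^2*d^2)*E2 - d^2*(2*b*d*z.re - a*c/(b*d)*(b*d) - a*c)*h9
    have Pd : d^2*(a^2*(a^2+b^2-c^2-d^2)) = d^2*(2*a*b*(a*b-c*d)*z.re) := by
      linear_combination E2c - (a^2*d^2 - d^4)*E1
    have P : a^2*(a^2+b^2-c^2-d^2) = 2*a*b*(a*b-c*d)*z.re :=
      mul_left_cancel₀ (by positivity : (d^2:ℝ) ≠ 0) Pd
    have hzr2 : b^2*z.re^2 ≤ a^2 := by nlinarith [sq_nonneg z.im]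
    have hsq : a^4*(a^2+b^2-c^2-d^2)^2 = 4*a^2*b^2*(a*b-c*d)^2*z.re^2 := by
      linear_combination (a^2*(a^2+b^2-c^2-d^2) + 2*a*b*(a*b-c*d)*z.re)*P
    have h10 : 4*a^2*(a*b-c*d)^2*(b^2*z.re^2) ≤ 4*a^2*(a*b-c*d)^2*a^2 :=
      mul_le_mul_of_nonneg_left hzr2 (by positivity)
    have h11 : a^4*((a^2+b^2-c^2-d^2)^2) ≤ a^4*(4*(a*b-c*d)^2) := by linarith [hsq, h10]
    have hTS : (a^2+b^2-c^2-d^2)^2 ≤ 4*(a*b-c*d)^2 :=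
      le_of_mul_le_mul_left h11 (by positivity)
    have hid : (a^2+b^2-c^2-d^2)^2 - 4*(a*b-c*d)^2 =
        ((a+b-c-d)*(a-b+c-d)*(a-b-c+d))*(a+b+c+d) := by ring
    by_contra hpos
    push_neg at hpos
    have hprod : 0 < ((a+b-c-d)*(a-b+c-d)*(a-b-c+d))*(a+b+c+d) :=
      mul_pos hpos (by linarith)
    linarith
  · -- sign condition → surjectivity
    intro hT w hw
    have hnw : Complex.normSq w = (a*c/(b*d))^2 := by rw [← Complex.sq_norm, hw]
    have hnwc : b^2*d^2*(w.re^2 + w.im^2) = a^2*c^2 := by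
      have h5 : w.re*w.re + w.im*w.im = (a*c/(b*d))^2 := by rw [← Complex.normSq_apply, hnw]
      field_simp at h5
      linear_combination h5
    have hwrc : w.re*(b*d) ≤ a*c := by
      have h2 : w.re ≤ a*c/(b*d) := hw ▸ Complex.re_le_norm w
      calc w.re*(b*d) ≤ (a*c/(b*d))*(b*d) := by
            apply mul_le_mul_of_nonneg_right h2 (by positivity)
        _ = a*c := by field_simp
    have hS : (0:ℝ) < a+b+c+d := by linarith
    have hTS : (a^2+b^2-c^2-d^2)^2 ≤ 4*(a*b-c*d)^2 := by
      have h3 : (a+b-c-d)*(a-b+c-d)*(a-b-c+d)*(a+b+c+d) ≤ 0 :=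
        mul_nonpos_of_nonpos_of_nonneg hT hS.le
      have hid : (a^2+b^2-c^2-d^2)^2 - 4*(a*b-c*d)^2 =
          (a+b-c-d)*(a-b+c-d)*(a-b-c+d)*(a+b+c+d) := by ring
      linarith
    have hm_eq : 4*a^2*b^2*((a^2 - d^2*w.re)^2 + (d^2*w.im)^2) =
        4*a^4*(a^2*b^2 + c^2*d^2) - 8*a^4*b^2*d^2*w.re := by
      linear_combination (4*a^2*d^2)*hnwc
    have hTa : (0:ℝ) ≤ a^4*(4*(a*b-c*d)^2 - (a^2+b^2-c^2-d^2)^2) :=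
      mul_nonneg (by positivity) (by linarith)
    have h8 : (0:ℝ) ≤ 8*a^4*b*d*(a*c - w.re*(b*d)) :=
      mul_nonneg (by positivity) (by linarith)
    have hineq : (a^2*(a^2+b^2-c^2-d^2))^2 ≤
        4*a^2*b^2*((a^2 - d^2*w.re)^2 + (d^2*w.im)^2) := by
      nlinarith [hm_eq, hTa, h8]
    obtain ⟨zr, zi, C1, C2⟩ := exists_on_circle (a^2) (b^2)
      (a^2*(a^2+b^2-c^2-d^2)) (a^2 - d^2*w.re) (-(d^2*w.im))
      (by positivity) (by positivity) (by nlinarith [hineq])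
    set z : ℂ := ⟨zr, zi⟩ with hzdef
    have hnz : Complex.normSq z = a^2/b^2 := by
      rw [Complex.normSq_apply]
      show zr*zr + zi*zi = a^2/b^2
      field_simp
      linear_combination C1
    have hkey : a^2 * Complex.normSq (z - 1) = d^2 * Complex.normSq (z - w) := by
      apply mul_left_cancel₀ (by positivity : (b^2:ℝ) ≠ 0)
      simp only [Complex.normSq_apply, Complex.sub_re, Complex.sub_im, Complex.one_re,
        Complex.one_im]
      show b^2*(a^2*((zr - 1)*(zr - 1) + (zi - 0)*(zi - 0))) =
        b^2*(d^2*((zr - w.re)*(zr - w.re) + (zi - w.im)*(zi - w.im)))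
      linear_combination (a^2 - d^2)*C1 - hnwc - C2
    have hn2 : Complex.normSq (z - w) ≠ 0 := by
      intro h0
      have hzw : z = w := sub_eq_zero.mp (Complex.normSq_eq_zero.mp h0)
      have h1 : Complex.normSq (z - 1) = 0 := by
        have h5 : a^2 * Complex.normSq (z - 1) = 0 := by rw [hkey, h0, mul_zero]
        rcases mul_eq_zero.mp h5 with h | h
        · exact absurd h (by positivity)
        · exact h
      have hz1 : z = 1 := sub_eq_zero.mp (Complex.normSq_eq_zero.mp h1)
      have hw1 : w = 1 := by rw [← hzw, hz1]
      have hac : a*c/(b*d) = 1 := by rw [← hw, hw1, norm_one]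
      have hab : a^2/b^2 = 1 := by rw [← hnz, hz1, Complex.normSq_one]
      have h6 : a = b := by field_simp at hab; exact (pow_left_inj₀ ha.le hb.le two_ne_zero).mp hab
      have h8 : c = d := by
        have h9 : a*c = b*d := by field_simp at hac; linarith
        rw [h6] at h9
        exact mul_left_cancel₀ (by positivity) h9
      exact hcd ⟨h6, h8⟩
    have hn1 : Complex.normSq (z - 1) ≠ 0 := by
      intro h0
      apply hn2
      have h5 : d^2 * Complex.normSq (z - w) = 0 := by rw [← hkey, h0, mul_zero]
      rcases mul_eq_zero.mp h5 with h | h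
      · exact absurd h (by positivity)
      · exact h
    have hz0 : z ≠ 0 := by
      intro h
      rw [h, map_zero] at hnz
      have : (0:ℝ) < a^2/b^2 := by positivity
      linarith
    have hzw : z - w ≠ 0 := fun h => hn2 (by rw [h, map_zero])
    have hz1 : z - 1 ≠ 0 := fun h => hn1 (by rw [h, map_zero])
    have ha0 : (a:ℂ) ≠ 0 := Complex.ofReal_ne_zero.mpr ha.ne'
    refine ⟨0, (a:ℂ), (a:ℂ)*(z-1)/z, (a:ℂ)*(z-1)/(z-w), ⟨?_, ?_, ?_, ?_⟩, ?_⟩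
    · rw [sub_zero, Complex.norm_of_nonneg ha.le]
    · apply absEq hb.le
      have e : (a:ℂ)*(z-1)/z - (a:ℂ) = -((a:ℂ)/z) := by field_simp; ring
      rw [e, Complex.normSq_neg, map_div₀, Complex.normSq_ofReal, hnz]
      field_simp
    · apply absEq hc.le
      have e : (a:ℂ)*(z-1)/(z-w) - (a:ℂ)*(z-1)/z = (a:ℂ)*(z-1)*w/(z*(z-w)) := by
        field_simp; ring
      rw [e, map_div₀, map_mul, map_mul, map_mul, Complex.normSq_ofReal, hnz, hnw]
      field_simp [hn2]
      linear_combination hkey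
    · apply absEq hd.le
      have e : (0:ℂ) - (a:ℂ)*(z-1)/(z-w) = -((a:ℂ)*(z-1)/(z-w)) := by ring
      rw [e, Complex.normSq_neg, map_div₀, map_mul, Complex.normSq_ofReal]
      field_simp [hn2]
      linear_combination hkey
    · rw [uniformizer]
      have e2 : (a:ℂ) - (a:ℂ)*(z-1)/z = (a:ℂ)/z := by field_simp; ring
      have e3 : (a:ℂ)*(z-1)/(z-w) - (a:ℂ)*(z-1)/z = (a:ℂ)*(z-1)*w/(z*(z-w)) := by
        field_simp; ring
      rw [sub_zero, sub_zero, e2, e3]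
      field_simp
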